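/- arXiv:1502.00190 — 4 statements merged into one kernel-verified Lean document; each statement's English description precedes it below -/
import Mathlib

section
/- Let ã_1, …, ã_m be unit vectors in ℝⁿ that span ℝⁿ, let p_i > 0 with Σ p_i = 1, and let P = Σ_i p_i (I − ã_i ã_iᵀ). Then the largest eigenvalue of P is strictly less than 1. -/
open Matrix

theorem mean_projection_eigenvalues_lt_one {n m : ℕ} (hn : 0 < n)
    (a : Fin m → EuclideanSpace ℝ (Fin n)) (ha : ∀ i, ‖a i‖ = 1)
    (hspan : Submodule.span ℝ (Set.range a) = ⊤)
    (p : Fin m → ℝ) (hp : ∀ i, 0 < p i) (hsum : ∑ i, p i = 1)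
    (P : Matrix (Fin n) (Fin n) ℝ)
    (hP : P = ∑ i, p i • ((1 : Matrix (Fin n) (Fin n) ℝ) - vecMulVec (a i) (a i)))
    (hPh : P.IsHermitian) :
    ∀ j, hPh.eigenvalues j < 1 := by
  intro j
  set v : EuclideanSpace ℝ (Fin n) := hPh.eigenvectorBasis j with hv
  have hvnorm : ‖v‖ = 1 := (hPh.eigenvectorBasis.orthonormal).1 j
  have hvv : (v : Fin n → ℝ) ⬝ᵥ (v : Fin n → ℝ) = 1 := by
    have := real_inner_self_eq_norm_sq v
    rw [hvnorm] at this
    simp only [PiLp.inner_apply, RCLike.inner_apply, conj_trivial] at this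
    simp only [dotProduct]
    linarith [this]
  have heig : P *ᵥ (v : Fin n → ℝ) = hPh.eigenvalues j • (v : Fin n → ℝ) :=
    hPh.mulVec_eigenvectorBasis j
  have hquad : (v : Fin n → ℝ) ⬝ᵥ (P *ᵥ (v : Fin n → ℝ)) = hPh.eigenvalues j := by
    rw [heig, dotProduct_smul, hvv]
    simp
  -- expand quadratic form
  have hmv : ∀ i, (vecMulVec (a i) (a i)) *ᵥ (v : Fin n → ℝ)
      = ((a i : Fin n → ℝ) ⬝ᵥ (v : Fin n → ℝ)) • (a i : Fin n → ℝ) := by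
    intro i
    funext k
    simp [vecMulVec_apply, Matrix.mulVec, dotProduct, Finset.mul_sum, mul_assoc, mul_comm,
      mul_left_comm]
  have hsummv : P *ᵥ (v : Fin n → ℝ)
      = ∑ i, p i • ((v : Fin n → ℝ) - ((a i : Fin n → ℝ) ⬝ᵥ (v : Fin n → ℝ)) • (a i : Fin n → ℝ)) := by
    rw [hP]
    have : ((∑ i, p i • ((1 : Matrix (Fin n) (Fin n) ℝ) - vecMulVec (a i) (a i))) *ᵥ (v : Fin n → ℝ))
        = ∑ i, (p i • ((1 : Matrix (Fin n) (Fin n) ℝ) - vecMulVec (a i) (a i))) *ᵥ (v : Fin n → ℝ) := by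
      induction (Finset.univ : Finset (Fin m)) using Finset.induction_on with
      | empty => simp
      | insert _ _ h ih => simp [Finset.sum_insert h, add_mulVec, ih]
    rw [this]
    refine Finset.sum_congr rfl fun i _ => ?_
    rw [smul_mulVec, sub_mulVec, one_mulVec, hmv i]
  have hexp : (v : Fin n → ℝ) ⬝ᵥ (P *ᵥ (v : Fin n → ℝ))
      = 1 - ∑ i, p i * ((a i : Fin n → ℝ) ⬝ᵥ (v : Fin n → ℝ))^2 := by
    rw [hsummv]
    have hdsum : (v : Fin n → ℝ) ⬝ᵥ (∑ i, p i • ((v : Fin n → ℝ) - ((a i : Fin n → ℝ) ⬝ᵥ (v : Fin n → ℝ)) • (a i : Fin n → ℝ)))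
        = ∑ i, (v : Fin n → ℝ) ⬝ᵥ (p i • ((v : Fin n → ℝ) - ((a i : Fin n → ℝ) ⬝ᵥ (v : Fin n → ℝ)) • (a i : Fin n → ℝ))) := by
      induction (Finset.univ : Finset (Fin m)) using Finset.induction_on with
      | empty => simp
      | insert _ _ h ih => simp [Finset.sum_insert h, dotProduct_add, ih]
    rw [hdsum, ← hsum, ← Finset.sum_sub_distrib]
    refine Finset.sum_congr rfl fun i _ => ?_
    have hsymm : (v : Fin n → ℝ) ⬝ᵥ (a i : Fin n → ℝ) = (a i : Fin n → ℝ) ⬝ᵥ (v : Fin n → ℝ) := by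
      simp [dotProduct, mul_comm]
    rw [dotProduct_smul, dotProduct_sub, dotProduct_smul, hvv, hsymm]
    simp [smul_eq_mul]
    ring
  -- find i with nonzero inner product
  have hvne : v ≠ 0 := by
    intro h
    rw [h, norm_zero] at hvnorm
    norm_num at hvnorm
  have hex : ∃ i, (a i : Fin n → ℝ) ⬝ᵥ (v : Fin n → ℝ) ≠ 0 := by
    by_contra h
    push_neg at h
    apply hvne
    have horth : ∀ w ∈ Submodule.span ℝ (Set.range a), inner (𝕜 := ℝ) w v = 0 := by
      intro w hw
      induction hw using Submodule.span_induction with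
      | mem x hx =>
        obtain ⟨i, rfl⟩ := hx
        have := h i
        simpa [PiLp.inner_apply, dotProduct, mul_comm] using this
      | zero => simp
      | add x y _ _ hx hy => rw [inner_add_left, hx, hy, add_zero]
      | smul c x _ hx => rw [inner_smul_left, hx, mul_zero]
    have := horth v (by rw [hspan]; trivial)
    exact inner_self_eq_zero.mp this
  obtain ⟨i₀, hi₀⟩ := hex
  have hpos : 0 < ∑ i, p i * ((a i : Fin n → ℝ) ⬝ᵥ (v : Fin n → ℝ))^2 := by
    apply Finset.sum_pos' (fun i _ => mul_nonneg (hp i).le (sq_nonneg _))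
    exact ⟨i₀, Finset.mem_univ i₀, mul_pos (hp i₀) (by positivity)⟩
  have := hquad.symm.trans hexp
  linarith
end

section
/- With Q = Σ_i p_i (P_i ⊗ P_i) where P_i = I − ã_i ã_iᵀ for unit vectors ã_i, the matrix Q is symmetric positive semidefinite and λ_max(Q) ≤ λ_max(P) where P = Σ_i p_i P_i. -/
open Matrix Kronecker

section Aux

variable {ι κ : Type*} [Fintype ι] [Fintype κ] [DecidableEq ι] [DecidableEq κ]

lemma myConjTranspose_kronecker (A : Matrix ι ι ℝ) (B : Matrix κ κ ℝ) :
    (A ⊗ₖ B)ᴴ = Aᴴ ⊗ₖ Bᴴ := by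
  ext ⟨i, j⟩ ⟨k, l⟩
  simp [conjTranspose_apply, kroneckerMap_apply]

lemma myKronecker_posSemidef {A : Matrix ι ι ℝ} {B : Matrix κ κ ℝ}
    (hA : A.PosSemidef) (hB : B.PosSemidef) : (A ⊗ₖ B).PosSemidef := by
  exact hA.kronecker hB

lemma myPosSemidef_smul {A : Matrix ι ι ℝ} (hA : A.PosSemidef) {r : ℝ} (hr : 0 ≤ r) :
    (r • A).PosSemidef := by
  refine .of_dotProduct_mulVec_nonneg ?_ (fun x => ?_)
  · unfold Matrix.IsHermitian
    rw [conjTranspose_smul, hA.1]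
    simp
  · rw [smul_mulVec, dotProduct_smul]
    exact mul_nonneg hr (hA.dotProduct_mulVec_nonneg x)

lemma myPosSemidef_sum {σ : Type*} {s : Finset σ} {f : σ → Matrix ι ι ℝ}
    (h : ∀ i ∈ s, (f i).PosSemidef) : (∑ i ∈ s, f i).PosSemidef := by
  classical
  induction s using Finset.induction with
  | empty => simpa using Matrix.PosSemidef.zero
  | insert _ _ hx ih =>
    rw [Finset.sum_insert hx]
    exact Matrix.PosSemidef.add (h _ (Finset.mem_insert_self _ _))
      (ih fun i hi => h i (Finset.mem_insert_of_mem hi))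

lemma myVecMulVec_psd (a : ι → ℝ) : (vecMulVec a a).PosSemidef := by
  have h : vecMulVec a a = (replicateRow Unit a)ᴴ * replicateRow Unit a := by
    rw [vecMulVec_eq Unit, conjTranspose_replicateRow]
    congr 1
  rw [h]
  exact posSemidef_conjTranspose_mul_self _

end Aux

section Aux2

variable {ι κ : Type*} [Fintype ι] [Fintype κ] [DecidableEq ι] [DecidableEq κ]

lemma myDot_vecMulVec (a x : ι → ℝ) : x ⬝ᵥ (vecMulVec a a *ᵥ x) = (a ⬝ᵥ x) ^ 2 := by
  simp only [dotProduct, mulVec, vecMulVec_apply, pow_two, Finset.sum_mul,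
    Finset.mul_sum]
  congr 1; funext i
  congr 1; funext j
  ring

lemma myOneSub_psd (a : ι → ℝ) (ha : ∑ i, a i ^ 2 = 1) :
    ((1 : Matrix ι ι ℝ) - vecMulVec a a).PosSemidef := by
  refine .of_dotProduct_mulVec_nonneg (Matrix.IsHermitian.sub Matrix.isHermitian_one (myVecMulVec_psd a).1) (fun x => ?_)
  rw [sub_mulVec, dotProduct_sub, one_mulVec, star_trivial, myDot_vecMulVec]
  have hcs := Finset.sum_mul_sq_le_sq_mul_sq Finset.univ a x
  rw [ha, one_mul] at hcs
  have h1 : a ⬝ᵥ x = ∑ i, a i * x i := rfl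
  have h2 : x ⬝ᵥ x = ∑ i, x i ^ 2 := by simp [dotProduct, pow_two]
  rw [h1, h2]
  linarith

lemma mySmulOneSub_psd [Nonempty ι] {M : Matrix ι ι ℝ} (hM : M.IsHermitian) {c : ℝ}
    (hc : ∀ i, hM.eigenvalues i ≤ c) : (c • (1 : Matrix ι ι ℝ) - M).PosSemidef := by
  have hU : (hM.eigenvectorUnitary : Matrix ι ι ℝ) * star (hM.eigenvectorUnitary : Matrix ι ι ℝ) = 1 :=
    (Matrix.mem_unitaryGroup_iff).mp hM.eigenvectorUnitary.2
  have hdiag : diagonal (RCLike.ofReal ∘ hM.eigenvalues) = diagonal hM.eigenvalues := by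
    congr 1
  have key : c • (1 : Matrix ι ι ℝ) - M =
      (hM.eigenvectorUnitary : Matrix ι ι ℝ) * diagonal (fun i => c - hM.eigenvalues i) *
        (hM.eigenvectorUnitary : Matrix ι ι ℝ)ᴴ := by
    have hspec := hM.spectral_theorem
    rw [hdiag, Unitary.conjStarAlgAut_apply] at hspec
    have hd : diagonal (fun i => c - hM.eigenvalues i) =
        c • (1 : Matrix ι ι ℝ) - diagonal hM.eigenvalues := by
      ext i j
      by_cases h : i = j <;> simp [Matrix.diagonal_apply, Matrix.one_apply, h]
    rw [hd, mul_sub, sub_mul, ← Matrix.star_eq_conjTranspose]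
    rw [mul_smul_comm, smul_mul_assoc, mul_one, hU, ← hspec]
  rw [key]
  exact (Matrix.PosSemidef.diagonal (fun i => sub_nonneg.mpr (hc i))).mul_mul_conjTranspose_same _

lemma myRayleigh_le [Nonempty ι] {M : Matrix ι ι ℝ} (hM : M.IsHermitian) {c : ℝ}
    (hc : ∀ i, hM.eigenvalues i ≤ c) (x : ι → ℝ) : x ⬝ᵥ (M *ᵥ x) ≤ c * (x ⬝ᵥ x) := by
  have h := (mySmulOneSub_psd hM hc).dotProduct_mulVec_nonneg x
  rw [star_trivial, sub_mulVec, dotProduct_sub, smul_mulVec, one_mulVec,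
    dotProduct_smul] at h
  simpa [smul_eq_mul] using sub_nonneg.mp h

lemma myKronecker_sub (A B C : Matrix ι ι ℝ) : A ⊗ₖ (B - C) = A ⊗ₖ B - A ⊗ₖ C := by
  ext ⟨i, j⟩ ⟨k, l⟩
  simp [kroneckerMap_apply, mul_sub]

lemma mySum_kronecker {σ : Type*} (s : Finset σ) (f : σ → Matrix ι ι ℝ) (B : Matrix κ κ ℝ) :
    (∑ i ∈ s, f i) ⊗ₖ B = ∑ i ∈ s, (f i) ⊗ₖ B := by
  ext ⟨i, j⟩ ⟨k, l⟩
  simp [kroneckerMap_apply, Finset.sum_mul, Matrix.sum_apply]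

end Aux2

lemma mySub_kronecker {ι κ : Type*} [Fintype ι] [Fintype κ] (A B : Matrix ι ι ℝ) (C : Matrix κ κ ℝ) :
    (A - B) ⊗ₖ C = A ⊗ₖ C - B ⊗ₖ C := by
  ext ⟨i, j⟩ ⟨k, l⟩
  simp [kroneckerMap_apply, sub_mul]

theorem lifted_Q_psd_le {n m : ℕ}
    (a : Fin m → EuclideanSpace ℝ (Fin n)) (ha : ∀ i, ‖a i‖ = 1)
    (p : Fin m → ℝ) (hp : ∀ i, 0 < p i) (hsum : ∑ i, p i = 1)
    (P : Matrix (Fin n) (Fin n) ℝ)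
    (hP : P = ∑ i, p i • ((1 : Matrix (Fin n) (Fin n) ℝ) - vecMulVec (a i) (a i)))
    (Q : Matrix (Fin n × Fin n) (Fin n × Fin n) ℝ)
    (hQ : Q = ∑ i, p i •
      (((1 : Matrix (Fin n) (Fin n) ℝ) - vecMulVec (a i) (a i)) ⊗ₖ
        ((1 : Matrix (Fin n) (Fin n) ℝ) - vecMulVec (a i) (a i))))
    (hPh : P.IsHermitian) (hQh : Q.IsHermitian) :
    Q.PosSemidef ∧ (⨆ j, hQh.eigenvalues j) ≤ ⨆ i, hPh.eigenvalues i := by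
  classical
  have hnorm : ∀ i, ∑ k, (a i) k ^ 2 = 1 := by
    intro i
    have h := ha i
    rw [EuclideanSpace.norm_eq] at h
    have h2 : (∑ k, ‖(a i) k‖ ^ 2) = 1 := Real.sqrt_eq_one.mp h
    simpa [Real.norm_eq_abs, sq_abs] using h2
  have hPi : ∀ i, ((1 : Matrix (Fin n) (Fin n) ℝ) - vecMulVec (a i) (a i)).PosSemidef :=
    fun i => myOneSub_psd _ (hnorm i)
  have hQpsd : Q.PosSemidef := by
    rw [hQ]
    apply myPosSemidef_sum
    intro i _
    exact myPosSemidef_smul (myKronecker_posSemidef (hPi i) (hPi i)) (hp i).le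
  refine ⟨hQpsd, ?_⟩
  rcases Nat.eq_zero_or_pos n with h0 | hn
  · subst h0
    rw [Real.iSup_of_isEmpty, Real.iSup_of_isEmpty]
  · haveI : Nonempty (Fin n) := Fin.pos_iff_nonempty.mp hn
    set c := ⨆ i, hPh.eigenvalues i with hc
    have hcle : ∀ i, hPh.eigenvalues i ≤ c := fun i =>
      le_ciSup (Set.finite_range _).bddAbove i
    have e1 : ((c • (1 : Matrix (Fin n) (Fin n) ℝ) - P) ⊗ₖ (1 : Matrix (Fin n) (Fin n) ℝ))
        = c • (1 : Matrix (Fin n × Fin n) (Fin n × Fin n) ℝ) - P ⊗ₖ 1 := by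
      rw [mySub_kronecker, smul_kronecker, one_kronecker_one]
    have e2 : (P ⊗ₖ (1 : Matrix (Fin n) (Fin n) ℝ))
        = ∑ i, p i • (((1 : Matrix (Fin n) (Fin n) ℝ) - vecMulVec (a i) (a i)) ⊗ₖ
            (1 : Matrix (Fin n) (Fin n) ℝ)) := by
      rw [hP, mySum_kronecker]
      congr 1
      funext i
      rw [smul_kronecker]
    have e3 : ∀ i, (((1 : Matrix (Fin n) (Fin n) ℝ) - vecMulVec (a i) (a i)) ⊗ₖ
          vecMulVec (a i) (a i))
        = ((1 : Matrix (Fin n) (Fin n) ℝ) - vecMulVec (a i) (a i)) ⊗ₖ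
            (1 : Matrix (Fin n) (Fin n) ℝ)
          - ((1 : Matrix (Fin n) (Fin n) ℝ) - vecMulVec (a i) (a i)) ⊗ₖ
            ((1 : Matrix (Fin n) (Fin n) ℝ) - vecMulVec (a i) (a i)) := by
      intro i
      rw [← myKronecker_sub, sub_sub_cancel]
    have hsplit : c • (1 : Matrix (Fin n × Fin n) (Fin n × Fin n) ℝ) - Q
        = ((c • (1 : Matrix (Fin n) (Fin n) ℝ) - P) ⊗ₖ (1 : Matrix (Fin n) (Fin n) ℝ))
          + ∑ i, p i • (((1 : Matrix (Fin n) (Fin n) ℝ) - vecMulVec (a i) (a i)) ⊗ₖ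
              vecMulVec (a i) (a i)) := by
      rw [e1, e2]
      simp only [e3, smul_sub, Finset.sum_sub_distrib, hQ]
      abel
    have hpsd2 : (c • (1 : Matrix (Fin n × Fin n) (Fin n × Fin n) ℝ) - Q).PosSemidef := by
      rw [hsplit]
      apply Matrix.PosSemidef.add
      · exact myKronecker_posSemidef (mySmulOneSub_psd hPh hcle) Matrix.PosSemidef.one
      · apply myPosSemidef_sum
        intro i _
        exact myPosSemidef_smul
          (myKronecker_posSemidef (hPi i) (myVecMulVec_psd _)) (hp i).le
    have hkey : ∀ x : Fin n × Fin n → ℝ, x ⬝ᵥ (Q *ᵥ x) ≤ c * (x ⬝ᵥ x) := by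
      intro x
      have h := hpsd2.dotProduct_mulVec_nonneg x
      rw [star_trivial, sub_mulVec, dotProduct_sub, smul_mulVec, one_mulVec,
        dotProduct_smul] at h
      simpa [smul_eq_mul] using sub_nonneg.mp h
    obtain ⟨j0, hj0⟩ := exists_eq_ciSup_of_finite (f := fun j => hQh.eigenvalues j)
    rw [← hj0]
    set v : Fin n × Fin n → ℝ := ⇑(hQh.eigenvectorBasis j0) with hv
    have hQv : Q *ᵥ v = hQh.eigenvalues j0 • v := hQh.mulVec_eigenvectorBasis j0
    have hvnorm : ‖hQh.eigenvectorBasis j0‖ = 1 := hQh.eigenvectorBasis.orthonormal.1 j0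
    have hvv : v ⬝ᵥ v = 1 := by
      rw [EuclideanSpace.norm_eq] at hvnorm
      have h2 : (∑ k, ‖(hQh.eigenvectorBasis j0) k‖ ^ 2) = 1 := Real.sqrt_eq_one.mp hvnorm
      simpa [dotProduct, Real.norm_eq_abs, sq_abs, pow_two] using h2
    have hfin := hkey v
    rw [hQv, dotProduct_smul, hvv, smul_eq_mul, mul_one, mul_one] at hfin
    exact hfin
end

section
/- If ã_1, …, ã_m are unit vectors spanning ℝⁿ and p_i > 0 sum to 1, then λ_max(Q) < 1 for Q = Σ_i p_i (P_i ⊗ P_i), P_i = I − ã_i ã_iᵀ. -/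
open Matrix Kronecker

private lemma vMv_mul {ι : Type*} [Fintype ι] (a b c d : ι → ℝ) :
    vecMulVec a b * vecMulVec c d = (b ⬝ᵥ c) • vecMulVec a d := by
  ext i j
  simp only [Matrix.mul_apply, vecMulVec_apply, Matrix.smul_apply, dotProduct,
    Finset.sum_mul, smul_eq_mul]
  exact Finset.sum_congr rfl fun k _ => by ring

private lemma sum_mulVec' {ι κ σ : Type*} [Fintype ι] [Fintype κ] [Fintype σ]
    (M : σ → Matrix ι κ ℝ) (v : κ → ℝ) :
    (∑ i, M i) *ᵥ v = ∑ i, (M i *ᵥ v) := by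
  ext j
  simp [Matrix.mulVec, dotProduct, Matrix.sum_apply, Finset.sum_mul]
  rw [Finset.sum_comm]

private lemma idem_dot {ι : Type*} [Fintype ι] (M : Matrix ι ι ℝ) (hs : Mᵀ = M)
    (hi : M * M = M) (v : ι → ℝ) : (M *ᵥ v) ⬝ᵥ (M *ᵥ v) = v ⬝ᵥ (M *ᵥ v) := by
  rw [dotProduct_mulVec, vecMul_mulVec, hs, hi, ← dotProduct_mulVec]

theorem lifted_Q_eigenvalues_lt_one {n m : ℕ}
    (a : Fin m → EuclideanSpace ℝ (Fin n)) (ha : ∀ i, ‖a i‖ = 1)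
    (hspan : Submodule.span ℝ (Set.range a) = ⊤)
    (p : Fin m → ℝ) (hp : ∀ i, 0 < p i) (hsum : ∑ i, p i = 1)
    (Q : Matrix (Fin n × Fin n) (Fin n × Fin n) ℝ)
    (hQ : Q = ∑ i, p i •
      (((1 : Matrix (Fin n) (Fin n) ℝ) - vecMulVec (a i) (a i)) ⊗ₖ
        ((1 : Matrix (Fin n) (Fin n) ℝ) - vecMulVec (a i) (a i))))
    (hQh : Q.IsHermitian) :
    ∀ j, hQh.eigenvalues j < 1 := by
  intro j
  set P : Fin m → Matrix (Fin n) (Fin n) ℝ :=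
    fun i => 1 - vecMulVec (a i) (a i) with hPdef
  set M : Fin m → Matrix (Fin n × Fin n) (Fin n × Fin n) ℝ :=
    fun i => P i ⊗ₖ P i with hMdef
  set v : Fin n × Fin n → ℝ := ⇑(hQh.eigenvectorBasis j) with hvdef
  set lam : ℝ := hQh.eigenvalues j with hlamdef
  -- unit norms
  have haa : ∀ i, (⇑(a i)) ⬝ᵥ (⇑(a i)) = 1 := by
    intro i
    have h := real_inner_self_eq_norm_sq (a i)
    rw [ha i] at h
    simp only [PiLp.inner_apply, RCLike.inner_apply, conj_trivial, one_pow] at h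
    simpa [dotProduct, mul_comm] using h
  have hvv : v ⬝ᵥ v = 1 := by
    have h := real_inner_self_eq_norm_sq (hQh.eigenvectorBasis j)
    rw [hQh.eigenvectorBasis.orthonormal.1 j] at h
    simp only [PiLp.inner_apply, RCLike.inner_apply, conj_trivial, one_pow] at h
    simpa [dotProduct, mul_comm] using h
  -- P properties
  have hPsymm : ∀ i, (P i)ᵀ = P i := by
    intro i
    ext x y
    simp [hPdef, Matrix.transpose_apply, Matrix.one_apply, vecMulVec_apply, mul_comm,
      eq_comm]
  have hPidem : ∀ i, P i * P i = P i := by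
    intro i
    have hWW : vecMulVec (a i) (a i) * vecMulVec (a i) (a i)
        = vecMulVec (a i) (a i) := by
      ext x y
      simp only [Matrix.mul_apply, vecMulVec_apply]
      have h1 : ∑ k, (a i x * a i k) * (a i k * a i y)
          = (∑ k, a i k * a i k) * (a i x * a i y) := by
        rw [Finset.sum_mul]; exact Finset.sum_congr rfl fun k _ => by ring
      rw [h1, show (∑ k, a i k * a i k) = 1 from haa i, one_mul]
    simp only [hPdef, mul_sub, sub_mul, one_mul, mul_one, hWW]
    abel
  have hMsymm : ∀ i, (M i)ᵀ = M i := by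
    intro i
    rw [hMdef]
    dsimp only
    rw [← kroneckerMap_transpose, hPsymm]
  have hMidem : ∀ i, M i * M i = M i := by
    intro i
    rw [hMdef]
    dsimp only
    rw [← mul_kronecker_mul, hPidem]
  -- eigen equation
  have hQv : Q *ᵥ v = lam • v := hQh.mulVec_eigenvectorBasis j
  have hquad : v ⬝ᵥ (Q *ᵥ v) = lam := by
    rw [hQv, dotProduct_smul, hvv, smul_eq_mul, mul_one]
  -- expansion
  have hexp : v ⬝ᵥ (Q *ᵥ v) = ∑ i, p i * (v ⬝ᵥ (M i *ᵥ v)) := by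
    rw [hQ]
    rw [show (∑ i, p i • (P i ⊗ₖ P i)) = ∑ i, p i • M i from rfl]
    rw [sum_mulVec']
    have : v ⬝ᵥ (∑ i, (p i • M i) *ᵥ v) = ∑ i, v ⬝ᵥ ((p i • M i) *ᵥ v) := by
      simp [dotProduct, Finset.sum_apply, Finset.mul_sum]
      rw [Finset.sum_comm]
    rw [this]
    refine Finset.sum_congr rfl fun i _ => ?_
    rw [smul_mulVec, dotProduct_smul, smul_eq_mul]
  set d : Fin m → ℝ := fun i => (v - M i *ᵥ v) ⬝ᵥ (v - M i *ᵥ v) with hddef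
  have hd : ∀ i, v ⬝ᵥ (M i *ᵥ v) = 1 - d i := by
    intro i
    have h1 := idem_dot (M i) (hMsymm i) (hMidem i) v
    have h2 : (M i *ᵥ v) ⬝ᵥ v = v ⬝ᵥ (M i *ᵥ v) := dotProduct_comm _ _
    have h3 : d i = v ⬝ᵥ v - v ⬝ᵥ (M i *ᵥ v) - ((M i *ᵥ v) ⬝ᵥ v
        - (M i *ᵥ v) ⬝ᵥ (M i *ᵥ v)) := by
      rw [hddef]
      dsimp only
      rw [sub_dotProduct, dotProduct_sub, dotProduct_sub]
    rw [hvv] at h3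
    linarith
  have hdnn : ∀ i, 0 ≤ d i := fun i => Finset.sum_nonneg fun q _ => mul_self_nonneg _
  have hlam : lam = 1 - ∑ i, p i * d i := by
    rw [← hquad, hexp]
    have : ∑ i, p i * (v ⬝ᵥ (M i *ᵥ v)) = ∑ i, (p i - p i * d i) := by
      refine Finset.sum_congr rfl fun i _ => ?_
      rw [hd i]; ring
    rw [this, Finset.sum_sub_distrib, hsum]
  -- conclude
  by_contra hcon
  push_neg at hcon
  have hsle : ∑ i, p i * d i ≤ 0 := by linarith
  have hterm : ∀ i ∈ Finset.univ, p i * d i = 0 := by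
    rw [← Finset.sum_eq_zero_iff_of_nonneg
      (fun i _ => mul_nonneg (hp i).le (hdnn i))]
    exact le_antisymm hsle (Finset.sum_nonneg fun i _ => mul_nonneg (hp i).le (hdnn i))
  have hMv : ∀ i, M i *ᵥ v = v := by
    intro i
    have : d i = 0 := by
      have := hterm i (Finset.mem_univ i)
      rcases mul_eq_zero.mp this with h | h
      · exact absurd h (hp i).ne'
      · exact h
    have hz : v - M i *ᵥ v = 0 := dotProduct_self_eq_zero.mp this
    rw [sub_eq_zero] at hz
    exact hz.symm
  -- from the span condition, v = 0
  have hav : ∀ i k, ∑ l, a i l * v (l, k) = 0 := by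
    intro i k
    have hsumP : ∀ l, ∑ j', a i j' * P i j' l = 0 := by
      intro l
      have h1 : ∑ j', a i j' * (a i j' * a i l) = (∑ k, a i k * a i k) * a i l := by
        rw [Finset.sum_mul]
        exact Finset.sum_congr rfl fun j' _ => by ring
      simp only [hPdef, Matrix.sub_apply, Matrix.one_apply, vecMulVec_apply, mul_sub,
        Finset.sum_sub_distrib, mul_ite, mul_one, mul_zero, Finset.sum_ite_eq',
        Finset.mem_univ, if_true]
      rw [h1, show (∑ k, a i k * a i k) = 1 from haa i, one_mul, sub_self]
    calc ∑ l, a i l * v (l, k)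
        = ∑ l, a i l * (M i *ᵥ v) (l, k) := by rw [hMv i]
      _ = ∑ l, ∑ q : Fin n × Fin n, a i l * (M i (l, k) q * v q) := by
          refine Finset.sum_congr rfl fun l _ => ?_
          rw [show (M i *ᵥ v) (l, k) = ∑ q, M i (l, k) q * v q from rfl, Finset.mul_sum]
      _ = ∑ q : Fin n × Fin n, ∑ l, a i l * (M i (l, k) q * v q) := Finset.sum_comm
      _ = 0 := by
          refine Finset.sum_eq_zero fun q _ => ?_
          have : ∑ l, a i l * (M i (l, k) q * v q)
              = (∑ l, a i l * P i l q.1) * (P i k q.2 * v q) := by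
            rw [Finset.sum_mul]
            refine Finset.sum_congr rfl fun l _ => ?_
            rw [show M i (l, k) q = P i l q.1 * P i k q.2 from rfl]
            ring
          rw [this, hsumP, zero_mul]
  have hvz : ∀ q : Fin n × Fin n, v q = 0 := by
    intro q
    set c : EuclideanSpace ℝ (Fin n) := WithLp.toLp 2 (fun l => v (l, q.2)) with hcdef
    have hc : ∀ i, inner (𝕜 := ℝ) (a i) c = 0 := by
      intro i
      simpa [PiLp.inner_apply, RCLike.inner_apply, hcdef, mul_comm] using hav i q.2
    have hmem : c ∈ (Submodule.span ℝ (Set.range a))ᗮ := by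
      rw [Submodule.mem_orthogonal]
      intro u hu
      induction hu using Submodule.span_induction with
      | mem x hx => obtain ⟨i, rfl⟩ := hx; exact hc i
      | zero => simp
      | add x y _ _ hx hy => rw [inner_add_left, hx, hy, add_zero]
      | smul t x _ hx => rw [real_inner_smul_left, hx, mul_zero]
    rw [hspan, Submodule.top_orthogonal_eq_bot, Submodule.mem_bot] at hmem
    have : c q.1 = 0 := by rw [hmem]; rfl
    simpa [hcdef] using this
  rw [show v ⬝ᵥ v = ∑ q, v q * v q from rfl] at hvv
  simp only [hvz, mul_zero, Finset.sum_const_zero] at hvv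
  exact zero_ne_one hvv
end

section
/- Let z^(k) be a random sequence in ℝⁿ with z^(k) = P_{i_k} z^(k−1) + η̃_{i_k} ã_{i_k}, where i_k is drawn i.i.d. with P(i_k = i) = p_i, ã_i are unit vectors, P_i = I − ã_i ã_iᵀ, and η̃_i are fixed scalars. Then E‖z^(k)‖² ≤ λ_max(P) · E‖z^(k−1)‖² + Σ_i p_i η̃_i², where P = Σ_i p_i P_i. -/
open Matrix

lemma norm_sq_dot {n : ℕ} (v : EuclideanSpace ℝ (Fin n)) :
    ‖v‖ ^ 2 = (v : Fin n → ℝ) ⬝ᵥ (v : Fin n → ℝ) := by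
  rw [← real_inner_self_eq_norm_sq]
  simp only [PiLp.inner_apply, dotProduct, RCLike.inner_apply, conj_trivial, mul_comm]

lemma inner_dot {n : ℕ} (v w : EuclideanSpace ℝ (Fin n)) :
    (inner ℝ v w : ℝ) = (v : Fin n → ℝ) ⬝ᵥ (w : Fin n → ℝ) := by
  simp only [PiLp.inner_apply, dotProduct, RCLike.inner_apply, conj_trivial, mul_comm]

lemma proj_mulVec {n : ℕ} (u z : Fin n → ℝ) :
    (((1 : Matrix (Fin n) (Fin n) ℝ) - vecMulVec u u) *ᵥ z) = z - (u ⬝ᵥ z) • u := by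
  rw [sub_mulVec, one_mulVec]
  congr 1
  ext i
  simp [vecMulVec_apply, mulVec, dotProduct, Finset.mul_sum, mul_comm, mul_assoc, mul_left_comm]

lemma step_dot {n : ℕ} (u z : Fin n → ℝ) (hu : u ⬝ᵥ u = 1) (c : ℝ) :
    (((1 : Matrix (Fin n) (Fin n) ℝ) - vecMulVec u u) *ᵥ z + c • u) ⬝ᵥ
      (((1 : Matrix (Fin n) (Fin n) ℝ) - vecMulVec u u) *ᵥ z + c • u)
      = z ⬝ᵥ (((1 : Matrix (Fin n) (Fin n) ℝ) - vecMulVec u u) *ᵥ z) + c ^ 2 := by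
  rw [proj_mulVec]
  have h := dotProduct_comm u z
  simp only [dotProduct_add, add_dotProduct, dotProduct_sub, sub_dotProduct,
    dotProduct_smul, smul_dotProduct, smul_eq_mul, hu, h]
  ring

lemma quad_le_sup {n : ℕ} (P : Matrix (Fin n) (Fin n) ℝ) (hPh : P.IsHermitian)
    (z : EuclideanSpace ℝ (Fin n)) :
    (z : Fin n → ℝ) ⬝ᵥ (P *ᵥ (z : Fin n → ℝ)) ≤ (⨆ j, hPh.eigenvalues j) * ‖z‖ ^ 2 := by
  set b := hPh.eigenvectorBasis with hb
  set Pz : EuclideanSpace ℝ (Fin n) := WithLp.toLp 2 (P *ᵥ (z : Fin n → ℝ) : Fin n → ℝ) with hPz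
  have hs : (Matrix.toEuclideanLin P).IsSymmetric :=
    (Matrix.isHermitian_iff_isSymmetric).1 hPh
  have hTz : Matrix.toEuclideanLin P z = Pz := rfl
  have hTb : ∀ j, Matrix.toEuclideanLin P (b j) = hPh.eigenvalues j • (b j) := by
    intro j
    apply (WithLp.equiv 2 (Fin n → ℝ)).injective
    have := hPh.mulVec_eigenvectorBasis j
    simpa using this
  have hsym : ∀ j, (inner ℝ (b j) Pz : ℝ) = hPh.eigenvalues j * inner ℝ (b j) z := by
    intro j
    rw [← hTz, ← hs (b j) z, hTb j, real_inner_smul_left]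
  have key : (inner ℝ z Pz : ℝ) = ∑ j, hPh.eigenvalues j * (inner ℝ (b j) z : ℝ) ^ 2 := by
    rw [← b.sum_inner_mul_inner z Pz]
    refine Finset.sum_congr rfl fun j _ => ?_
    rw [hsym j, real_inner_comm z (b j)]
    ring
  have parseval : ∑ j, (inner ℝ (b j) z : ℝ) ^ 2 = ‖z‖ ^ 2 := by
    rw [← real_inner_self_eq_norm_sq, ← b.sum_inner_mul_inner z z]
    refine Finset.sum_congr rfl fun j _ => ?_
    rw [real_inner_comm z (b j)]; ring
  have hQ : (z : Fin n → ℝ) ⬝ᵥ (P *ᵥ (z : Fin n → ℝ)) = (inner ℝ z Pz : ℝ) := by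
    rw [inner_dot]
  rw [hQ, key, ← parseval, Finset.mul_sum]
  refine Finset.sum_le_sum fun j _ => ?_
  exact mul_le_mul_of_nonneg_right
    (le_ciSup (Set.Finite.bddAbove (Set.finite_range _)) j) (sq_nonneg _)


/-- One noisy Kaczmarz step on the error vector: `z ↦ P_i z + η̃_i ã_i`. -/
def kstep {n m : ℕ} (a : Fin m → EuclideanSpace ℝ (Fin n)) (η : Fin m → ℝ)
    (i : Fin m) (z : EuclideanSpace ℝ (Fin n)) : EuclideanSpace ℝ (Fin n) :=
  WithLp.toLp 2 (((1 : Matrix (Fin n) (Fin n) ℝ) - vecMulVec (a i) (a i)).mulVec z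
    + η i • (show Fin n → ℝ from a i) : Fin n → ℝ)

/-- The error vector after applying the steps indexed by `s : Fin k → Fin m`
in order, starting from `z0`. -/
def ktraj {n m : ℕ} (a : Fin m → EuclideanSpace ℝ (Fin n)) (η : Fin m → ℝ)
    (z0 : EuclideanSpace ℝ (Fin n)) {k : ℕ} (s : Fin k → Fin m) :
    EuclideanSpace ℝ (Fin n) :=
  (List.ofFn s).foldl (fun z i => kstep a η i z) z0

/-- Expected squared error after `k` i.i.d. random steps, the expectation written
as a weighted sum over all row-index sequences of length `k`. -/
noncomputable def kMSE {n m : ℕ} (a : Fin m → EuclideanSpace ℝ (Fin n))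
    (η : Fin m → ℝ) (p : Fin m → ℝ) (z0 : EuclideanSpace ℝ (Fin n)) (k : ℕ) : ℝ :=
  ∑ s : Fin k → Fin m, (∏ j, p (s j)) * ‖ktraj a η z0 s‖ ^ 2

lemma kstep_norm_sq {n m : ℕ} (a : Fin m → EuclideanSpace ℝ (Fin n)) (ha : ∀ i, ‖a i‖ = 1)
    (η : Fin m → ℝ) (i : Fin m) (z : EuclideanSpace ℝ (Fin n)) :
    ‖kstep a η i z‖ ^ 2 = (z : Fin n → ℝ) ⬝ᵥ
      (((1 : Matrix (Fin n) (Fin n) ℝ) - vecMulVec (a i) (a i)) *ᵥ (z : Fin n → ℝ))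
      + η i ^ 2 := by
  have hu : (a i : Fin n → ℝ) ⬝ᵥ (a i : Fin n → ℝ) = 1 := by
    rw [← norm_sq_dot, ha i]; norm_num
  rw [norm_sq_dot]
  exact step_dot _ (z : Fin n → ℝ) hu (η i)

lemma ktraj_snoc {n m : ℕ} (a : Fin m → EuclideanSpace ℝ (Fin n)) (η : Fin m → ℝ)
    (z0 : EuclideanSpace ℝ (Fin n)) {k : ℕ} (t : Fin k → Fin m) (i : Fin m) :
    ktraj a η z0 (Fin.snoc t i) = kstep a η i (ktraj a η z0 t) := by
  unfold ktraj
  rw [List.ofFn_succ', List.concat_eq_append, List.foldl_append, List.foldl_cons, List.foldl_nil]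
  have h1 : (fun j : Fin k => (Fin.snoc t i : Fin (k+1) → Fin m) j.castSucc) = t := by
    funext j; simp
  have h2 : (Fin.snoc t i : Fin (k+1) → Fin m) (Fin.last k) = i := by simp
  rw [h1, h2]

lemma sum_step_bound {n m : ℕ}
    (a : Fin m → EuclideanSpace ℝ (Fin n)) (ha : ∀ i, ‖a i‖ = 1)
    (p : Fin m → ℝ) (η : Fin m → ℝ)
    (P : Matrix (Fin n) (Fin n) ℝ)
    (hP : P = ∑ i, p i • ((1 : Matrix (Fin n) (Fin n) ℝ) - vecMulVec (a i) (a i)))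
    (hPh : P.IsHermitian) (z : EuclideanSpace ℝ (Fin n)) :
    ∑ i, p i * ‖kstep a η i z‖ ^ 2
      ≤ (⨆ j, hPh.eigenvalues j) * ‖z‖ ^ 2 + ∑ i, p i * η i ^ 2 := by
  have hsumv : (P *ᵥ (z : Fin n → ℝ)) = ∑ i, p i •
      (((1 : Matrix (Fin n) (Fin n) ℝ) - vecMulVec (a i) (a i)) *ᵥ (z : Fin n → ℝ)) := by
    rw [hP]
    ext j
    simp [mulVec, dotProduct, Finset.sum_apply, Finset.sum_mul, Finset.mul_sum, Pi.smul_apply,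
      Matrix.sum_apply, smul_eq_mul]
    rw [Finset.sum_comm]
    congr 1; ext i; congr 1; ext x; ring
  have hQ : ∑ i, p i * ‖kstep a η i z‖ ^ 2
      = (z : Fin n → ℝ) ⬝ᵥ (P *ᵥ (z : Fin n → ℝ)) + ∑ i, p i * η i ^ 2 := by
    have hds : (z : Fin n → ℝ) ⬝ᵥ (∑ i, p i •
        (((1 : Matrix (Fin n) (Fin n) ℝ) - vecMulVec (a i) (a i)) *ᵥ (z : Fin n → ℝ)))
        = ∑ i, (z : Fin n → ℝ) ⬝ᵥ (p i •
        (((1 : Matrix (Fin n) (Fin n) ℝ) - vecMulVec (a i) (a i)) *ᵥ (z : Fin n → ℝ))) := by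
      simp only [dotProduct, Finset.sum_apply, Finset.mul_sum]
      rw [Finset.sum_comm]
    rw [hsumv, hds, ← Finset.sum_add_distrib]
    refine Finset.sum_congr rfl fun i _ => ?_
    rw [kstep_norm_sq a ha η i z, dotProduct_smul, smul_eq_mul]
    ring
  rw [hQ]
  exact add_le_add_left (quad_le_sup P hPh z) _

theorem one_step_mse_bound {n m : ℕ}
    (a : Fin m → EuclideanSpace ℝ (Fin n)) (ha : ∀ i, ‖a i‖ = 1)
    (p : Fin m → ℝ) (hp : ∀ i, 0 < p i) (hsum : ∑ i, p i = 1)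
    (η : Fin m → ℝ) (z0 : EuclideanSpace ℝ (Fin n))
    (P : Matrix (Fin n) (Fin n) ℝ)
    (hP : P = ∑ i, p i • ((1 : Matrix (Fin n) (Fin n) ℝ) - vecMulVec (a i) (a i)))
    (hPh : P.IsHermitian) :
    ∀ k : ℕ, kMSE a η p z0 (k + 1) ≤
      (⨆ j, hPh.eigenvalues j) * kMSE a η p z0 k + ∑ i, p i * η i ^ 2 := by
  intro k
  set L := ⨆ j, hPh.eigenvalues j with hL
  set C := ∑ i, p i * η i ^ 2 with hC
  have hpr : ∀ t : Fin k → Fin m, 0 ≤ ∏ j, p (t j) := fun t =>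
    Finset.prod_nonneg fun j _ => (hp _).le
  have hone : ∑ t : Fin k → Fin m, ∏ j, p (t j) = 1 := by
    rw [← Fintype.piFinset_univ, ← Finset.prod_univ_sum]
    simp [hsum]
  have he := Fintype.sum_equiv (Fin.snocEquiv (fun _ : Fin (k+1) => Fin m))
    (fun x : Fin m × (Fin k → Fin m) =>
      (∏ j, p ((Fin.snoc x.2 x.1 : Fin (k+1) → Fin m) j)) *
        ‖ktraj a η z0 (Fin.snoc x.2 x.1 : Fin (k+1) → Fin m)‖ ^ 2)
    (fun s : Fin (k+1) → Fin m => (∏ j, p (s j)) * ‖ktraj a η z0 s‖ ^ 2)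
    (fun x => rfl)
  have hdecomp : kMSE a η p z0 (k+1)
      = ∑ t : Fin k → Fin m, (∏ j, p (t j)) *
          ∑ i, p i * ‖kstep a η i (ktraj a η z0 t)‖ ^ 2 := by
    rw [kMSE, ← he, Fintype.sum_prod_type, Finset.sum_comm]
    refine Finset.sum_congr rfl fun t _ => ?_
    rw [Finset.mul_sum]
    refine Finset.sum_congr rfl fun i _ => ?_
    rw [ktraj_snoc]
    rw [show (∏ j : Fin (k+1), p ((Fin.snoc t i : Fin (k+1) → Fin m) j))
        = (∏ j : Fin k, p (t j)) * p i by
      rw [Fin.prod_univ_castSucc]; simp]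
    ring
  rw [hdecomp]
  calc ∑ t : Fin k → Fin m, (∏ j, p (t j)) *
          ∑ i, p i * ‖kstep a η i (ktraj a η z0 t)‖ ^ 2
      ≤ ∑ t : Fin k → Fin m, (∏ j, p (t j)) * (L * ‖ktraj a η z0 t‖ ^ 2 + C) :=
        Finset.sum_le_sum fun t _ => mul_le_mul_of_nonneg_left
          (sum_step_bound a ha p η P hP hPh _) (hpr t)
    _ = L * kMSE a η p z0 k + C * ∑ t : Fin k → Fin m, ∏ j, p (t j) := by
        rw [kMSE, Finset.mul_sum, Finset.mul_sum, ← Finset.sum_add_distrib]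
        refine Finset.sum_congr rfl fun t _ => ?_
        ring
    _ = L * kMSE a η p z0 k + C := by rw [hone, mul_one]
end
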